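/- Let E be a nontrivial real normed vector space, let f : E → ℝ be concave, and let Y ∈ E be a point at which f is Fréchet differentiable with derivative f′(Y) ∈ E* (a continuous linear functional). Then sup_{z ∈ E, z ≠ Y} ( f(z) − f(Y) ) / ‖z − Y‖ = ‖f′(Y)‖, the operator (dual) norm of the derivative. In particular, for a Wasserstein uncertainty set and a concave differentiable cost, the worst-case sensitivity is maxᵢ ‖f′(Yᵢ)‖. -/

import Mathlib

/-- for a concave `f : E → ℝ` Fréchet differentiable at `Y`,
the maximal difference quotient equals the dual norm of the derivative:
`sup_{z ≠ Y} (f z − f Y)/‖z − Y‖ = ‖f′(Y)‖`. -/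
theorem stmt18 (E : Type*) [NormedAddCommGroup E] [NormedSpace ℝ E] [Nontrivial E]
    (f : E → ℝ) (hconc : ConcaveOn ℝ Set.univ f)
    (Y : E) (f' : E →L[ℝ] ℝ) (hdiff : HasFDerivAt f f' Y) :
    sSup {r : ℝ | ∃ z : E, z ≠ Y ∧ r = (f z - f Y) / ‖z - Y‖} = ‖f'‖ := by
  -- directional derivative as a one-sided limit of difference quotients
  have key : ∀ v : E, Filter.Tendsto (fun t : ℝ => (f (Y + t • v) - f Y) / t)
      (nhdsWithin 0 (Set.Ioi 0)) (nhds (f' v)) := by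
    intro v
    have h1 : HasDerivAt (fun t : ℝ => Y + t • v) v 0 := by
      simpa using ((hasDerivAt_id (0:ℝ)).smul_const v).const_add Y
    have h2 : HasDerivAt (fun t : ℝ => f (Y + t • v)) (f' v) 0 := by
      have := HasFDerivAt.comp_hasDerivAt (0:ℝ)
        (show HasFDerivAt f f' ((fun t : ℝ => Y + t • v) 0) by simpa using hdiff) h1
      exact this
    have h3 := hasDerivAt_iff_tendsto_slope.mp h2
    have h4 : Filter.Tendsto (slope (fun t : ℝ => f (Y + t • v)) 0)
        (nhdsWithin 0 (Set.Ioi 0)) (nhds (f' v)) :=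
      h3.mono_left (nhdsWithin_mono _ (fun x hx => ne_of_gt hx))
    refine h4.congr (fun t => ?_)
    simp [slope_def_field, div_eq_inv_mul]
  -- the tangent inequality from concavity
  have tangent : ∀ z : E, f z - f Y ≤ f' (z - Y) := by
    intro z
    refine ge_of_tendsto (key (z - Y)) ?_
    filter_upwards [Ioo_mem_nhdsGT_of_mem (by norm_num : (0:ℝ) ∈ Set.Ico 0 1)]
      with t ht
    have ht0 : 0 < t := ht.1
    have ht1 : t < 1 := ht.2
    have hcc := hconc.2 (Set.mem_univ Y) (Set.mem_univ z)
      (by linarith : (0:ℝ) ≤ 1 - t) (le_of_lt ht0) (by ring)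
    have heq : (1 - t) • Y + t • z = Y + t • (z - Y) := by
      simp [smul_sub, sub_smul]; abel
    rw [heq] at hcc
    rw [le_div_iff₀ ht0]
    have : (1 - t) • f Y + t • f z = f Y + t * (f z - f Y) := by
      simp [smul_eq_mul]; ring
    rw [this] at hcc
    linarith
  set S := {r : ℝ | ∃ z : E, z ≠ Y ∧ r = (f z - f Y) / ‖z - Y‖} with hS
  have hub : ∀ r ∈ S, r ≤ ‖f'‖ := by
    rintro r ⟨z, hz, rfl⟩
    have hnorm : 0 < ‖z - Y‖ := by
      rw [norm_pos_iff, sub_ne_zero]; exact hz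
    rw [div_le_iff₀ hnorm]
    calc f z - f Y ≤ f' (z - Y) := tangent z
      _ ≤ ‖f' (z - Y)‖ := le_abs_self _
      _ ≤ ‖f'‖ * ‖z - Y‖ := f'.le_opNorm _
  have hbdd : BddAbove S := ⟨‖f'‖, hub⟩
  have hne : S.Nonempty := by
    obtain ⟨z, hz⟩ := exists_ne Y
    exact ⟨_, z, hz, rfl⟩
  refine le_antisymm (csSup_le hne hub) ?_
  -- lower bound: f' v ≤ sSup S * ‖v‖ for all v
  have hdir : ∀ v : E, f' v ≤ sSup S * ‖v‖ := by
    intro v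
    rcases eq_or_ne v 0 with rfl | hv
    · simp
    have hnv : 0 < ‖v‖ := norm_pos_iff.mpr hv
    refine le_of_tendsto (key v) ?_
    filter_upwards [self_mem_nhdsWithin] with t ht
    have ht0 : (0:ℝ) < t := ht
    have hzY : Y + t • v ≠ Y := by
      simp only [ne_eq, add_eq_left, smul_eq_zero, not_or]
      exact ⟨ne_of_gt ht0, hv⟩
    have hel : (f (Y + t • v) - f Y) / ‖(Y + t • v) - Y‖ ∈ S := ⟨_, hzY, rfl⟩
    have hle := le_csSup hbdd hel
    have hnn : ‖(Y + t • v) - Y‖ = t * ‖v‖ := by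
      simp [norm_smul, abs_of_pos ht0]
    rw [hnn, div_le_iff₀ (by positivity)] at hle
    rw [div_le_iff₀ ht0]
    calc f (Y + t • v) - f Y ≤ sSup S * (t * ‖v‖) := hle
      _ = sSup S * ‖v‖ * t := by ring
  have hSnn : 0 ≤ sSup S := by
    obtain ⟨v, hv⟩ := exists_ne (0 : E)
    have hnv : 0 < ‖v‖ := norm_pos_iff.mpr hv
    have h1 := hdir v
    have h2 := hdir (-v)
    simp only [map_neg, norm_neg] at h2
    nlinarith
  exact f'.opNorm_le_bound hSnn (fun v => by
    calc ‖f' v‖ = max (f' v) (f' (-v)) := by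
          simp [Real.norm_eq_abs, abs_eq_max_neg]
      _ ≤ sSup S * ‖v‖ := by
          refine max_le (hdir v) ?_
          simpa using hdir (-v))
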